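/- Let L be a first-order language and let M be an infinite L-structure that has property A. Then there is no injective continuous group homomorphism from S_∞ into the automorphism group Aut(M) of M. -/

import Mathlib

open FirstOrder

/-- The topology of pointwise convergence on the permutation group of a set `V`
(regarded as a discrete space): the topology induced from the product topology
on `V → V` where `V` carries the discrete topology. -/
instance permPointwiseTopology (V : Type*) : TopologicalSpace (Equiv.Perm V) :=
  TopologicalSpace.induced (fun g : Equiv.Perm V => (g : V → V))
    (@Pi.topologicalSpace V (fun _ => V) (fun _ => ⊥))

/-- The automorphism group of an `L`-structure `M`, realized as the subgroup of
`Equiv.Perm M` consisting of the permutations preserving all function and relation symbols. -/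
def firstOrderAut (L : FirstOrder.Language) (M : Type*) [L.Structure M] :
    Subgroup (Equiv.Perm M) where
  carrier := {g : Equiv.Perm M |
    (∀ (n : ℕ) (f : L.Functions n) (x : Fin n → M),
        g (Language.Structure.funMap f x) = Language.Structure.funMap f (⇑g ∘ x)) ∧
    (∀ (n : ℕ) (r : L.Relations n) (x : Fin n → M),
        Language.Structure.RelMap r (⇑g ∘ x) ↔ Language.Structure.RelMap r x)}
  one_mem' := ⟨fun _ _ _ => rfl, fun _ _ _ => Iff.rfl⟩
  mul_mem' := by
    rintro a b ⟨haf, har⟩ ⟨hbf, hbr⟩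
    refine ⟨fun n f x => ?_, fun n r x => ?_⟩
    · show a (b (Language.Structure.funMap f x)) = _
      rw [hbf, haf]
      rfl
    · show Language.Structure.RelMap r (⇑a ∘ (⇑b ∘ x)) ↔ _
      rw [har, hbr]
  inv_mem' := by
    rintro a ⟨haf, har⟩
    refine ⟨fun n f x => ?_, fun n r x => ?_⟩
    · apply a.injective
      rw [Equiv.Perm.coe_inv, Equiv.apply_symm_apply, haf]
      congr 1
      funext i
      simp
    · have h := har n r (⇑a⁻¹ ∘ x)
      have hx : ⇑a ∘ (⇑a⁻¹ ∘ x) = x := by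
        funext i
        simp
      rw [hx] at h
      exact h.symm

/-- Property A: for every pair of disjoint countably infinite subsets `X₁, X₂` of `M`
there are a set `I` of binary relation symbols of `L` and an element `x ∈ M` such that
every `y ∈ X₁` satisfies `R (x, y)` for some `R ∈ I`, while no `y ∈ X₂` satisfies
`R (x, y)` for any `R ∈ I`. -/
def PropertyA (L : FirstOrder.Language) (M : Type*) [L.Structure M] : Prop :=
  ∀ X₁ X₂ : Set M, Disjoint X₁ X₂ → X₁.Countable → X₁.Infinite →
    X₂.Countable → X₂.Infinite →
    ∃ (I : Set (L.Relations 2)) (x : M),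
      (∀ y ∈ X₁, ∃ R ∈ I, Language.Structure.RelMap R ![x, y]) ∧
      (∀ y ∈ X₂, ∀ R ∈ I, ¬ Language.Structure.RelMap R ![x, y])


/-! ### Auxiliary material for the main theorem -/

private lemma permCoe_continuous (V : Type*) :
    @Continuous _ _ _ (@Pi.topologicalSpace V (fun _ => V) (fun _ => ⊥))
      (fun g : Equiv.Perm V => (g : V → V)) :=
  continuous_induced_dom

private lemma perm_isOpen_fiber (V : Type*) (x y : V) :
    IsOpen {g : Equiv.Perm V | g x = y} := by
  letI : TopologicalSpace V := ⊥
  haveI : DiscreteTopology V := ⟨rfl⟩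
  have h1 : IsOpen {f : V → V | f x = y} := by
    have h2 : {f : V → V | f x = y} = (fun f : V → V => f x) ⁻¹' {y} := rfl
    rw [h2]
    exact (continuous_apply x).isOpen_preimage _ (isOpen_discrete _)
  exact (permCoe_continuous V).isOpen_preimage _ h1

private lemma exists_finset_of_isOpen_one {U : Set (Equiv.Perm ℕ)} (hU : IsOpen U)
    (h1 : (1 : Equiv.Perm ℕ) ∈ U) :
    ∃ F : Finset ℕ, ∀ g : Equiv.Perm ℕ, (∀ i ∈ F, g i = i) → g ∈ U := by
  obtain ⟨t, ht, rfl⟩ : ∃ t, @IsOpen (ℕ → ℕ) (@Pi.topologicalSpace ℕ (fun _ => ℕ) (fun _ => ⊥)) t ∧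
      (fun g : Equiv.Perm ℕ => (g : ℕ → ℕ)) ⁻¹' t = U := hU
  rw [@isOpen_pi_iff ℕ (fun _ => ℕ) (fun _ => ⊥)] at ht
  obtain ⟨F, u, hu, hsub⟩ := ht _ h1
  refine ⟨F, fun g hg => hsub fun i hi => ?_⟩
  have h2 := (hu i hi).2
  simpa [hg i hi] using h2

section Aux

variable {M : Type*} {A : Subgroup (Equiv.Perm M)}

private lemma exists_fresh_pair (e : Equiv.Perm ℕ →* A) (hinj : Function.Injective e)
    (P : Finset M) (F : Finset ℕ) :
    ∃ g : Equiv.Perm ℕ, (∀ i ∈ F, g i = i) ∧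
      ∃ m : M, m ∉ P ∧ ((e g : Equiv.Perm M) m ∉ P) ∧ (e g : Equiv.Perm M) m ≠ m := by
  classical
  obtain ⟨p, hpge, hpprime⟩ := Nat.exists_infinite_primes (2 * P.card + 2)
  obtain ⟨n, rfl⟩ : ∃ n, p = n + 2 := ⟨p - 2, by have := hpprime.two_le; omega⟩
  set N : ℕ := F.sup id + 1 with hN
  set S : Finset ℕ := Finset.Ico N (N + (n + 2)) with hS
  have hScard : S.card = n + 2 := by rw [hS, Nat.card_Ico]; omega
  let eqv : Fin (n + 2) ≃ {x // x ∈ S} := (Finset.equivFinOfCardEq hScard).symm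
  set g : Equiv.Perm ℕ := (finRotate (n + 2)).extendDomain eqv with hg
  have hfix : ∀ i ∈ F, g i = i := by
    intro i hi
    apply Equiv.Perm.extendDomain_apply_not_subtype
    intro hmem
    rw [hS, Finset.mem_Ico] at hmem
    have h1 : i ≤ F.sup id := Finset.le_sup (f := id) hi
    omega
  have hgne : g ≠ 1 := by
    rw [hg, Ne, Equiv.Perm.extendDomain_eq_one_iff]
    exact isCycle_finRotate.ne_one
  have hford : orderOf (finRotate (n + 2)) = n + 2 := by
    rw [isCycle_finRotate.orderOf, support_finRotate]
    simp
  have hgp : g ^ (n + 2) = 1 := by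
    have h1 : finRotate (n + 2) ^ (n + 2) = 1 := by
      exact orderOf_dvd_iff_pow_eq_one.mp (by rw [hford])
    rw [hg, ← Equiv.Perm.extendDomain_pow, h1, Equiv.Perm.extendDomain_one]
  refine ⟨g, hfix, ?_⟩
  by_contra hcon
  push_neg at hcon
  set h : Equiv.Perm M := (e g : Equiv.Perm M) with hh
  have hhne : h ≠ 1 := by
    intro h1
    apply hgne
    apply hinj
    rw [map_one]
    exact Subtype.ext h1
  have hhp : h ^ (n + 2) = 1 := by
    have h2 : (e g) ^ (n + 2) = 1 := by rw [← map_pow, hgp, map_one]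
    rw [hh, ← SubgroupClass.coe_pow, h2, OneMemClass.coe_one]
  obtain ⟨m0, hm0⟩ : ∃ m0, h m0 ≠ m0 := by
    by_contra hall
    push_neg at hall
    exact hhne (Equiv.ext hall)
  have key : ∀ d, 0 < d → d < n + 2 → (h ^ d) m0 ≠ m0 := by
    intro d hd0 hdp heq
    have hcop : Nat.Coprime d (n + 2) := by
      rw [Nat.coprime_comm, hpprime.coprime_iff_not_dvd]
      intro hdvd
      exact absurd (Nat.le_of_dvd hd0 hdvd) (by omega)
    obtain ⟨a, -, ha⟩ := Nat.exists_mul_mod_eq_one_of_coprime hcop (by omega)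
    have hda : d * a = (n + 2) * (d * a / (n + 2)) + 1 := by
      conv_lhs => rw [← Nat.div_add_mod (d * a) (n + 2)]
      omega
    have h1 : (h ^ (d * a)) m0 = m0 := by
      rw [pow_mul]
      exact Function.IsFixedPt.perm_pow heq a
    rw [hda, pow_add, pow_mul, hhp, one_pow, pow_one, one_mul] at h1
    exact hm0 h1
  have hlt : ∀ i j : ℕ, i < j → j < n + 2 → (h ^ i) m0 ≠ (h ^ j) m0 := by
    intro i j hij hjp heq
    have : (h ^ i) ((h ^ (j - i)) m0) = (h ^ i) m0 := by
      rw [← Equiv.Perm.mul_apply, ← pow_add]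
      rw [show i + (j - i) = j by omega]
      exact heq.symm
    exact key (j - i) (by omega) (by omega) ((h ^ i).injective this)
  have hinjf : Function.Injective (fun k : Fin (n + 2) => (h ^ (k : ℕ)) m0) := by
    intro i j hij
    by_contra hne
    rcases lt_or_gt_of_ne (fun hv : (i : ℕ) = (j : ℕ) => hne (Fin.ext hv)) with hc | hc
    · exact hlt i j hc j.isLt hij
    · exact hlt j i hc i.isLt hij.symm
  have hmoved : ∀ k : ℕ, h ((h ^ k) m0) ≠ (h ^ k) m0 := by
    intro k heq
    apply hm0
    have : (h ^ k) (h m0) = (h ^ k) m0 := by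
      rw [← Equiv.Perm.mul_apply, ← pow_succ, pow_succ', Equiv.Perm.mul_apply]
      exact heq
    exact (h ^ k).injective this
  set T : Finset M := P ∪ P.image ⇑h⁻¹ with hT
  have hmem : ∀ k : Fin (n + 2), (h ^ (k : ℕ)) m0 ∈ T := by
    intro k
    by_cases h1 : (h ^ (k : ℕ)) m0 ∈ P
    · exact Finset.mem_union_left _ h1
    · have h2 : h ((h ^ (k : ℕ)) m0) ∈ P := by
        by_contra h3
        exact hmoved _ (hcon _ h1 h3)
      refine Finset.mem_union_right _ ?_
      refine Finset.mem_image.mpr ⟨_, h2, ?_⟩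
      exact h.symm_apply_apply _
  have hsub : Finset.univ.image (fun k : Fin (n + 2) => (h ^ (k : ℕ)) m0) ⊆ T :=
    fun x hx => by
      obtain ⟨k, _, rfl⟩ := Finset.mem_image.mp hx
      exact hmem k
  have hcard1 : (Finset.univ.image (fun k : Fin (n + 2) => (h ^ (k : ℕ)) m0)).card = n + 2 := by
    rw [Finset.card_image_of_injective _ hinjf, Finset.card_univ, Fintype.card_fin]
  have hcard2 : T.card ≤ 2 * P.card := by
    calc T.card ≤ P.card + (P.image ⇑h⁻¹).card := Finset.card_union_le _ _
    _ ≤ P.card + P.card := by have := Finset.card_image_le (s := P) (f := ⇑h⁻¹); omega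
    _ = 2 * P.card := by omega
  have := Finset.card_le_card hsub
  omega

variable (e : Equiv.Perm ℕ →* A) (hinj : Function.Injective e)

/-- One step of the recursive construction: given a finite set `P` of used points and a
stage `k`, produce the new used set, a permutation fixing `0, …, k-1`, and a fresh pair. -/
private noncomputable def nextStep (P : Finset M) (k : ℕ) :
    Finset M × Equiv.Perm ℕ × M × M :=
  letI := Classical.decEq M
  (insert (exists_fresh_pair e hinj P (Finset.range k)).choose_spec.2.choose
      (insert ((e (exists_fresh_pair e hinj P (Finset.range k)).choose : Equiv.Perm M)
        (exists_fresh_pair e hinj P (Finset.range k)).choose_spec.2.choose) P),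
    (exists_fresh_pair e hinj P (Finset.range k)).choose,
    (exists_fresh_pair e hinj P (Finset.range k)).choose_spec.2.choose,
    (e (exists_fresh_pair e hinj P (Finset.range k)).choose : Equiv.Perm M)
      (exists_fresh_pair e hinj P (Finset.range k)).choose_spec.2.choose)

private lemma nextStep_spec (P : Finset M) (k : ℕ) :
    (∀ i ∈ Finset.range k, (nextStep e hinj P k).2.1 i = i) ∧
      (nextStep e hinj P k).2.2.1 ∉ P ∧ (nextStep e hinj P k).2.2.2 ∉ P ∧
      (nextStep e hinj P k).2.2.2 ≠ (nextStep e hinj P k).2.2.1 ∧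
      (nextStep e hinj P k).2.2.2
        = (e (nextStep e hinj P k).2.1 : Equiv.Perm M) (nextStep e hinj P k).2.2.1 ∧
      P ⊆ (nextStep e hinj P k).1 ∧
      (nextStep e hinj P k).2.2.1 ∈ (nextStep e hinj P k).1 ∧
      (nextStep e hinj P k).2.2.2 ∈ (nextStep e hinj P k).1 := by
  letI := Classical.decEq M
  have hfix := (exists_fresh_pair e hinj P (Finset.range k)).choose_spec.1
  have hm := (exists_fresh_pair e hinj P (Finset.range k)).choose_spec.2.choose_spec
  refine ⟨hfix, hm.1, hm.2.1, hm.2.2, rfl, ?_, ?_, ?_⟩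
  · exact fun y hy => Finset.mem_insert_of_mem (Finset.mem_insert_of_mem hy)
  · exact Finset.mem_insert_self _ _
  · exact Finset.mem_insert_of_mem (Finset.mem_insert_self _ _)

private noncomputable def seqStep : ℕ → Finset M × Equiv.Perm ℕ × M × M
  | 0 => nextStep e hinj ∅ 0
  | n + 1 => nextStep e hinj (seqStep n).1 (n + 1)

/-- The set of points used before stage `n`. -/
private noncomputable def prevP : ℕ → Finset M
  | 0 => ∅
  | n + 1 => (seqStep e hinj n).1

private lemma seqStep_eq : ∀ n, seqStep e hinj n = nextStep e hinj (prevP e hinj n) n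
  | 0 => rfl
  | _ + 1 => rfl

end Aux

/-- If `M` is an infinite `L`-structure with property A, then there is no injective
continuous group homomorphism from `S_∞ = Equiv.Perm ℕ` (with the pointwise convergence
topology) into `Aut(M)` (with the pointwise convergence topology). -/
theorem no_continuous_embedding_of_Sinfty_of_propertyA
    (L : FirstOrder.Language) (M : Type*) [L.Structure M] [Infinite M]
    (hA : PropertyA L M) :
    ¬ ∃ e : Equiv.Perm ℕ →* firstOrderAut L M,
        Function.Injective e ∧ Continuous e := by
  rintro ⟨e, hinj, hcont⟩
  have spec : ∀ n, (∀ i ∈ Finset.range n, (seqStep e hinj n).2.1 i = i) ∧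
      (seqStep e hinj n).2.2.1 ∉ prevP e hinj n ∧
      (seqStep e hinj n).2.2.2 ∉ prevP e hinj n ∧
      (seqStep e hinj n).2.2.2 ≠ (seqStep e hinj n).2.2.1 ∧
      (seqStep e hinj n).2.2.2
        = (e (seqStep e hinj n).2.1 : Equiv.Perm M) (seqStep e hinj n).2.2.1 ∧
      prevP e hinj n ⊆ (seqStep e hinj n).1 ∧
      (seqStep e hinj n).2.2.1 ∈ (seqStep e hinj n).1 ∧
      (seqStep e hinj n).2.2.2 ∈ (seqStep e hinj n).1 := fun n => by
    rw [seqStep_eq e hinj n]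
    exact nextStep_spec e hinj (prevP e hinj n) n
  have hPmono : ∀ n, prevP e hinj n ⊆ prevP e hinj (n + 1) :=
    fun n => (spec n).2.2.2.2.2.1
  have hPle : ∀ {k l : ℕ}, k ≤ l → prevP e hinj k ⊆ prevP e hinj l := by
    intro k l hkl
    induction l, hkl using Nat.le_induction with
    | base => exact subset_rfl
    | succ l _ ih => exact ih.trans (hPmono l)
  have haP : ∀ n, (seqStep e hinj n).2.2.1 ∈ prevP e hinj (n + 1) :=
    fun n => (spec n).2.2.2.2.2.2.1
  have hbP : ∀ n, (seqStep e hinj n).2.2.2 ∈ prevP e hinj (n + 1) :=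
    fun n => (spec n).2.2.2.2.2.2.2
  -- distinctness facts
  have haa : ∀ {n k : ℕ}, n < k →
      (seqStep e hinj n).2.2.1 ≠ (seqStep e hinj k).2.2.1 := by
    intro n k hnk heq
    exact (spec k).2.1 (heq ▸ hPle hnk (haP n))
  have hbb : ∀ {n k : ℕ}, n < k →
      (seqStep e hinj n).2.2.2 ≠ (seqStep e hinj k).2.2.2 := by
    intro n k hnk heq
    exact (spec k).2.2.1 (heq ▸ hPle hnk (hbP n))
  have hab : ∀ n k : ℕ, (seqStep e hinj n).2.2.1 ≠ (seqStep e hinj k).2.2.2 := by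
    intro n k heq
    rcases lt_trichotomy n k with h | h | h
    · exact (spec k).2.2.1 (heq ▸ hPle h (haP n))
    · subst h
      exact (spec n).2.2.2.1 heq.symm
    · exact (spec n).2.1 (heq.symm ▸ hPle h (hbP k))
  have hainj : Function.Injective (fun n => (seqStep e hinj n).2.2.1) := by
    intro n k heq
    by_contra hne
    rcases Nat.lt_or_ge n k with h | h
    · exact haa h heq
    · exact haa (by omega) heq.symm
  have hbinj : Function.Injective (fun n => (seqStep e hinj n).2.2.2) := by
    intro n k heq
    by_contra hne
    rcases Nat.lt_or_ge n k with h | h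
    · exact hbb h heq
    · exact hbb (by omega) heq.symm
  have hdisj : Disjoint (Set.range fun n => (seqStep e hinj n).2.2.1)
      (Set.range fun n => (seqStep e hinj n).2.2.2) := by
    rw [Set.disjoint_left]
    rintro y ⟨n, rfl⟩ ⟨k, hk⟩
    exact hab n k hk.symm
  obtain ⟨I, x, h₁, h₂⟩ := hA _ _ hdisj (Set.countable_range _)
    (Set.infinite_range_of_injective hainj) (Set.countable_range _)
    (Set.infinite_range_of_injective hbinj)
  -- continuity: the stabilizer of x is open, hence contains a basic subgroup
  have hUopen : IsOpen {g' : Equiv.Perm ℕ | (e g' : Equiv.Perm M) x = x} :=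
    ((perm_isOpen_fiber M x x).preimage continuous_subtype_val).preimage hcont
  have h1U : (1 : Equiv.Perm ℕ) ∈ {g' : Equiv.Perm ℕ | (e g' : Equiv.Perm M) x = x} := by
    simp [Set.mem_setOf_eq, map_one]
  obtain ⟨F, hF⟩ := exists_finset_of_isOpen_one hUopen h1U
  set n₀ : ℕ := F.sup id + 1 with hn₀
  have hgx : (e (seqStep e hinj n₀).2.1 : Equiv.Perm M) x = x := by
    apply hF
    intro i hi
    apply (spec n₀).1
    rw [Finset.mem_range]
    have h1 : i ≤ F.sup id := Finset.le_sup (f := id) hi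
    omega
  obtain ⟨R, hRI, hRel⟩ := h₁ (seqStep e hinj n₀).2.2.1 ⟨n₀, rfl⟩
  have hrel := (e (seqStep e hinj n₀).2.1).2.2
  have hcomp : ⇑(e (seqStep e hinj n₀).2.1 : Equiv.Perm M) ∘ ![x, (seqStep e hinj n₀).2.2.1]
      = ![x, (seqStep e hinj n₀).2.2.2] := by
    funext i
    fin_cases i
    · simpa using hgx
    · simpa using ((spec n₀).2.2.2.2.1).symm
  have hR2 := (hrel 2 R ![x, (seqStep e hinj n₀).2.2.1]).mpr hRel
  rw [hcomp] at hR2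
  exact h₂ (seqStep e hinj n₀).2.2.2 ⟨n₀, rfl⟩ R hRI hR2
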